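/- arXiv:2110.10294 — 4 statements merged into one kernel-verified Lean document; each statement's English description precedes it below -/
import Mathlib

section
/- For any integer n ≥ 2 and real numbers x_1, ..., x_n, the difference between the maximum of the x_i and their average is at least (1/(2n(n-1))) times the sum over all pairs i < j of |x_i - x_j|. -/
open Finset

theorem max_sub_mean_ge (n : ℕ) (hn : 2 ≤ n) (x : Fin n → ℝ) :
    (Finset.univ.sup' (Finset.univ_nonempty_iff.2 ⟨⟨0, by omega⟩⟩) x)
      - (∑ i, x i) / n
      ≥ (1 / (2 * n * (n - 1))) *
        ∑ p ∈ (Finset.univ : Finset (Fin n × Fin n)).filter (fun p => p.1 < p.2),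
          |x p.1 - x p.2| := by
  set M := Finset.univ.sup' (Finset.univ_nonempty_iff.2 ⟨⟨0, by omega⟩⟩) x with hMdef
  have hMx : ∀ i, x i ≤ M := fun i => Finset.le_sup' x (mem_univ i)
  set f : Fin n → ℝ := fun i => M - x i with hf
  have hf0 : ∀ i, 0 ≤ f i := fun i => sub_nonneg.2 (hMx i)
  set S := ∑ i, f i with hS
  have hS0 : 0 ≤ S := Finset.sum_nonneg fun i _ => hf0 i
  have hn' : (2 : ℝ) ≤ (n : ℝ) := by exact_mod_cast hn
  have h1 : ∑ p ∈ (Finset.univ : Finset (Fin n × Fin n)).filter (fun p => p.1 < p.2),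
        |x p.1 - x p.2|
      ≤ ∑ p ∈ (Finset.univ : Finset (Fin n × Fin n)).filter (fun p => p.1 ≠ p.2),
        (f p.1 + f p.2) := by
    calc ∑ p ∈ (Finset.univ : Finset (Fin n × Fin n)).filter (fun p => p.1 < p.2),
          |x p.1 - x p.2|
        ≤ ∑ p ∈ (Finset.univ : Finset (Fin n × Fin n)).filter (fun p => p.1 < p.2),
          (f p.1 + f p.2) := by
          apply Finset.sum_le_sum
          intro p _
          rw [abs_sub_le_iff]
          constructor <;> simp only [hf] <;> nlinarith [hMx p.1, hMx p.2]
      _ ≤ _ := by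
          apply Finset.sum_le_sum_of_subset_of_nonneg
          · intro p hp
            simp only [mem_filter, mem_univ, true_and] at hp ⊢
            exact ne_of_lt hp
          · intro p _ _
            exact add_nonneg (hf0 _) (hf0 _)
  have key : ∀ i : Fin n, (∑ j, if i ≠ j then f i + f j else 0)
      = ((n : ℝ) * f i + S) - 2 * f i := by
    intro i
    have e1 : ∀ j, (if i ≠ j then f i + f j else 0)
        = (f i + f j) - (if i = j then f i + f j else 0) := by
      intro j; by_cases h : i = j <;> simp [h]
    rw [Finset.sum_congr rfl (fun j _ => e1 j), Finset.sum_sub_distrib,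
      Finset.sum_ite_eq, if_pos (mem_univ i), Finset.sum_add_distrib,
      Finset.sum_const, card_univ, Fintype.card_fin, nsmul_eq_mul, ← hS]
    ring
  have h2 : ∑ p ∈ (Finset.univ : Finset (Fin n × Fin n)).filter (fun p => p.1 ≠ p.2),
      (f p.1 + f p.2) = 2 * ((n : ℝ) - 1) * S := by
    rw [Finset.sum_filter, Fintype.sum_prod_type]
    rw [Finset.sum_congr rfl (fun i _ => key i), Finset.sum_sub_distrib,
      Finset.sum_add_distrib, ← Finset.mul_sum, ← hS, Finset.sum_const, card_univ,
      Fintype.card_fin, nsmul_eq_mul, ← Finset.mul_sum, ← hS]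
    ring
  have hT : ∑ p ∈ (Finset.univ : Finset (Fin n × Fin n)).filter (fun p => p.1 < p.2),
      |x p.1 - x p.2| ≤ 2 * ((n : ℝ) - 1) * S := h2 ▸ h1
  have hSval : S = n * M - ∑ i, x i := by
    simp [hS, hf, Finset.sum_sub_distrib, Finset.sum_const, card_univ, mul_comm]
  have hc : (0:ℝ) < 2 * (n : ℝ) * ((n : ℝ) - 1) := by nlinarith
  have hstep : (1 / (2 * (n : ℝ) * ((n : ℝ) - 1))) *
      ∑ p ∈ (Finset.univ : Finset (Fin n × Fin n)).filter (fun p => p.1 < p.2),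
        |x p.1 - x p.2|
      ≤ (1 / (2 * (n : ℝ) * ((n : ℝ) - 1))) * (2 * ((n : ℝ) - 1) * S) := by
    apply mul_le_mul_of_nonneg_left hT
    positivity
  have heq : (1 / (2 * (n : ℝ) * ((n : ℝ) - 1))) * (2 * ((n : ℝ) - 1) * S) = S / n := by
    have hn1 : (n : ℝ) - 1 ≠ 0 := by linarith
    field_simp
  have hgoal : M - (∑ i, x i) / n = S / n := by
    rw [hSval]
    field_simp
  rw [ge_iff_le, hgoal]
  calc _ ≤ (1 / (2 * (n : ℝ) * ((n : ℝ) - 1))) * (2 * ((n : ℝ) - 1) * S) := hstep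
    _ = S / n := heq
end

section
/- Let t_0 ≥ t_1 ≥ t_2 ≥ ... be a nonincreasing sequence of real-valued random variables with t_0 = T (a constant), and suppose that for each k, E[e^{-(t_k - t_{k+1})} | F_k] ≤ (2dk+1)/(2dk+2) for a filtration {F_k} to which the sequence is adapted. Then E[e^{t_k - T}] ≤ ∏_{j=0}^{k-1} (2dj+1)/(2dj+2), and consequently t_k → -∞ almost surely. -/
open MeasureTheory Filter Real

theorem decreasing_times_exp_bound (d : ℕ) (hd : 1 ≤ d)
    {Θ : Type*} [m0 : MeasurableSpace Θ] (P : Measure Θ) [IsProbabilityMeasure P]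
    (ℱ : Filtration ℕ m0) (T : ℝ) (t : ℕ → Θ → ℝ)
    (h0 : ∀ θ, t 0 θ = T)
    (hanti : ∀ k θ, t (k + 1) θ ≤ t k θ)
    (hadapted : Adapted ℱ t)
    (hcond : ∀ k, ∀ᵐ θ ∂P,
      (P[(fun θ => exp (-(t k θ - t (k + 1) θ))) | ℱ k]) θ
        ≤ (2 * d * k + 1 : ℝ) / (2 * d * k + 2)) :
    (∀ k, ∫ θ, exp (t k θ - T) ∂P
        ≤ ∏ j ∈ Finset.range k, ((2 * d * j + 1 : ℝ) / (2 * d * j + 2))) ∧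
    (∀ᵐ θ ∂P, Tendsto (fun k => t k θ) atTop atBot) := by
  have hle : ∀ k θ, t k θ ≤ T := by
    intro k θ
    induction k with
    | zero => exact (h0 θ).le
    | succ n ih => exact (hanti n θ).trans ih
  have hmeas : ∀ k, Measurable (t k) :=
    fun k => (hadapted k).mono (ℱ.le k) le_rfl
  set c : ℕ → ℝ := fun k => (2 * d * k + 1 : ℝ) / (2 * d * k + 2) with hc
  have hc_nonneg : ∀ k, 0 ≤ c k := fun k => by positivity
  set f : ℕ → Θ → ℝ := fun k θ => exp (t k θ - T) with hfdef
  have hf_meas : ∀ k, Measurable (f k) :=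
    fun k => ((hmeas k).sub measurable_const).exp
  have hf_le_one : ∀ k θ, f k θ ≤ 1 := fun k θ =>
    exp_le_one_iff.2 (sub_nonpos.2 (hle k θ))
  have hf_nonneg : ∀ k θ, 0 ≤ f k θ := fun k θ => (exp_pos _).le
  have hf_int : ∀ k, Integrable (f k) P := by
    intro k
    refine Integrable.mono' (integrable_const 1) (hf_meas k).aestronglyMeasurable ?_
    filter_upwards with θ
    rw [Real.norm_eq_abs, abs_of_nonneg (hf_nonneg k θ)]
    exact hf_le_one k θ
  set g : ℕ → Θ → ℝ := fun k θ => exp (-(t k θ - t (k + 1) θ)) with hgdef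
  have hg_meas : ∀ k, Measurable (g k) :=
    fun k => (((hmeas k).sub (hmeas (k + 1))).neg).exp
  have hg_nonneg : ∀ k θ, 0 ≤ g k θ := fun k θ => (exp_pos _).le
  have hg_le_one : ∀ k θ, g k θ ≤ 1 := fun k θ =>
    exp_le_one_iff.2 (neg_nonpos.2 (sub_nonneg.2 (hanti k θ)))
  have hg_int : ∀ k, Integrable (g k) P := by
    intro k
    refine Integrable.mono' (integrable_const 1) (hg_meas k).aestronglyMeasurable ?_
    filter_upwards with θ
    rw [Real.norm_eq_abs, abs_of_nonneg (hg_nonneg k θ)]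
    exact hg_le_one k θ
  have hfg_int : ∀ k, Integrable (f k * g k) P := by
    intro k
    refine Integrable.mono' (integrable_const 1) ((hf_meas k).mul (hg_meas k)).aestronglyMeasurable ?_
    filter_upwards with θ
    rw [Pi.mul_apply, Real.norm_eq_abs, abs_of_nonneg (mul_nonneg (hf_nonneg k θ) (hg_nonneg k θ))]
    exact mul_le_one₀ (hf_le_one k θ) (hg_nonneg k θ) (hg_le_one k θ)
  have hf_sm : ∀ k, StronglyMeasurable[ℱ k] (f k) := by
    intro k
    exact (Real.continuous_exp.comp_stronglyMeasurable
      ((hadapted k).sub measurable_const).stronglyMeasurable)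
  -- key step
  have step : ∀ k, ∫ θ, f (k + 1) θ ∂P ≤ c k * ∫ θ, f k θ ∂P := by
    intro k
    have hprod : ∀ θ, f (k + 1) θ = f k θ * g k θ := by
      intro θ
      simp only [hfdef, hgdef]
      rw [← Real.exp_add]
      ring_nf
    have h1 : ∫ θ, f (k + 1) θ ∂P = ∫ θ, (f k * g k) θ ∂P := by
      refine integral_congr_ae ?_
      filter_upwards with θ using hprod θ
    rw [h1]
    have h2 : ∫ θ, (f k * g k) θ ∂P = ∫ θ, (P[(f k * g k)|ℱ k]) θ ∂P :=
      (integral_condExp (ℱ.le k) (f := f k * g k)).symm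
    have h3 : P[(f k * g k)|ℱ k] =ᵐ[P] f k * P[g k|ℱ k] :=
      condExp_mul_of_stronglyMeasurable_left (hf_sm k) (hfg_int k) (hg_int k)
    rw [h2, integral_congr_ae h3]
    have h4 : ∫ θ, (f k * P[g k|ℱ k]) θ ∂P ≤ ∫ θ, f k θ * c k ∂P := by
      refine integral_mono_ae ?_ ((hf_int k).mul_const (c k)) ?_
      · exact integrable_condExp.congr h3
      · filter_upwards [hcond k] with θ hθ
        exact mul_le_mul_of_nonneg_left hθ (hf_nonneg k θ)
    calc ∫ θ, (f k * P[g k|ℱ k]) θ ∂P ≤ ∫ θ, f k θ * c k ∂P := h4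
      _ = c k * ∫ θ, f k θ ∂P := by rw [integral_mul_const]; ring
  -- the product bound
  have bound : ∀ k, ∫ θ, f k θ ∂P ≤ ∏ j ∈ Finset.range k, c j := by
    intro k
    induction k with
    | zero =>
      simp only [Finset.range_zero, Finset.prod_empty]
      have : ∀ θ, f 0 θ = 1 := by intro θ; simp [hfdef, h0 θ]
      rw [integral_congr_ae (Eventually.of_forall this)]
      simp
    | succ n ih =>
      rw [Finset.prod_range_succ]
      calc ∫ θ, f (n + 1) θ ∂P ≤ c n * ∫ θ, f n θ ∂P := step n
        _ ≤ c n * ∏ j ∈ Finset.range n, c j :=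
            mul_le_mul_of_nonneg_left ih (hc_nonneg n)
        _ = (∏ j ∈ Finset.range n, c j) * c n := mul_comm _ _
  refine ⟨bound, ?_⟩
  -- the product tends to 0
  have hprod_zero : Tendsto (fun k => ∏ j ∈ Finset.range k, c j) atTop (nhds 0) := by
    have hcd : (0:ℝ) < 1 / (2 * d + 2) := by positivity
    have hle_exp : ∀ k, ∏ j ∈ Finset.range k, c j
        ≤ exp (-(1 / (2 * d + 2)) * ∑ j ∈ Finset.range k, (1 / (j + 1) : ℝ)) := by
      intro k
      have : ∀ j ∈ Finset.range k, c j ≤ exp (-(1 / (2 * d + 2)) * (1 / (j + 1) : ℝ)) := by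
        intro j _
        have h2 : (0:ℝ) < 2 * d * j + 2 := by positivity
        have hcval : c j = 1 - 1 / (2 * d * j + 2) := by
          simp only [hc]; rw [eq_sub_iff_add_eq, ← add_div, div_eq_one_iff_eq h2.ne']
          ring
        have h5 : c j ≤ exp (-(1 / (2 * d * j + 2))) := by
          rw [hcval]
          have := Real.add_one_le_exp (-(1 / (2 * (d:ℝ) * j + 2)))
          linarith
        refine h5.trans (exp_le_exp.2 ?_)
        rw [neg_mul, neg_le_neg_iff]
        rw [div_mul_div_comm, one_mul]
        refine div_le_div_of_nonneg_left one_pos.le h2 ?_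
        have : (2 * (d:ℝ) * j + 2) ≤ (2 * d + 2) * (j + 1) := by
          have : (0:ℝ) ≤ d := Nat.cast_nonneg d
          nlinarith
        linarith
      calc ∏ j ∈ Finset.range k, c j
          ≤ ∏ j ∈ Finset.range k, exp (-(1 / (2 * d + 2)) * (1 / (j + 1) : ℝ)) :=
            Finset.prod_le_prod (fun j _ => hc_nonneg j) this
        _ = exp (∑ j ∈ Finset.range k, -(1 / (2 * d + 2)) * (1 / (j + 1) : ℝ)) :=
            (Real.exp_sum _ _).symm
        _ = exp (-(1 / (2 * d + 2)) * ∑ j ∈ Finset.range k, (1 / (j + 1) : ℝ)) := by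
            rw [← Finset.mul_sum]
    have htends : Tendsto (fun k => exp (-(1 / (2 * (d:ℝ) + 2))
        * ∑ j ∈ Finset.range k, (1 / (j + 1) : ℝ))) atTop (nhds 0) := by
      refine Real.tendsto_exp_atBot.comp ?_
      have := tendsto_sum_range_one_div_nat_succ_atTop
      exact (this.const_mul_atTop_of_neg (by linarith : -(1 / (2 * (d:ℝ) + 2)) < 0)).congr
        (fun k => rfl)
    refine squeeze_zero (fun k => Finset.prod_nonneg fun j _ => hc_nonneg j) hle_exp htends
  -- a.s. divergence
  have hBM : ∀ n : ℕ, P {θ | ∀ k, (-(n:ℝ)) ≤ t k θ} = 0 := by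
    intro n
    set B := {θ | ∀ k, (-(n:ℝ)) ≤ t k θ} with hB
    have hBmeas : MeasurableSet B := by
      have : B = ⋂ k, {θ | (-(n:ℝ)) ≤ t k θ} := by ext θ; simp [hB]
      rw [this]
      exact MeasurableSet.iInter fun k => measurableSet_le measurable_const (hmeas k)
    have hint : ∀ k, exp (-(n:ℝ) - T) * (P B).toReal ≤ ∫ θ, f k θ ∂P := by
      intro k
      have h1 : ∫ θ in B, exp (-(n:ℝ) - T) ∂P = exp (-(n:ℝ) - T) * (P B).toReal := by
        rw [setIntegral_const]; rw [smul_eq_mul, measureReal_def]; ring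
      rw [← h1]
      calc ∫ θ in B, exp (-(n:ℝ) - T) ∂P ≤ ∫ θ in B, f k θ ∂P := by
            refine setIntegral_mono_on (integrableOn_const (measure_ne_top _ _))
              ((hf_int k).integrableOn) hBmeas ?_
            intro θ hθ
            exact exp_le_exp.2 (by linarith [hθ k])
        _ ≤ ∫ θ, f k θ ∂P :=
            setIntegral_le_integral (hf_int k) (Eventually.of_forall fun θ => hf_nonneg k θ)
    have hlim : exp (-(n:ℝ) - T) * (P B).toReal ≤ 0 := by
      refine ge_of_tendsto hprod_zero ?_
      filter_upwards with k
      exact (hint k).trans (bound k)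
    have hpos : 0 < exp (-(n:ℝ) - T) := exp_pos _
    have : (P B).toReal ≤ 0 := by
      by_contra h
      push_neg at h
      nlinarith
    have h0B : (P B).toReal = 0 := le_antisymm this ENNReal.toReal_nonneg
    exact (ENNReal.toReal_eq_zero_iff _).1 h0B |>.resolve_right (measure_ne_top _ _)
  have hae : ∀ᵐ θ ∂P, ∀ n : ℕ, ∃ k, t k θ < -(n:ℝ) := by
    rw [ae_all_iff]
    intro n
    rw [ae_iff]
    refine measure_mono_null ?_ (hBM n)
    intro θ hθ k
    simp only [Set.mem_setOf_eq, not_exists, not_lt] at hθ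
    exact hθ k
  filter_upwards [hae] with θ hθ
  rw [tendsto_atBot]
  intro b
  obtain ⟨n, hn⟩ := exists_nat_ge (-b)
  obtain ⟨k, hk⟩ := hθ n
  rw [eventually_atTop]
  refine ⟨k, fun m hm => ?_⟩
  have hmono : t m θ ≤ t k θ :=
    (antitone_nat_of_succ_le (f := fun p => t p θ) fun p => hanti p θ) hm
  have : t k θ < -(n:ℝ) := hk
  have hb : -(n:ℝ) ≤ b := by linarith
  linarith
end

section
/- Let α, β : [0,∞) → ℝ be monotone nondecreasing functions, bounded on every finite interval, with α(0) = 0, and suppose that for all t, δ ≥ 0, α(t+δ) - α(t) ≥ δ e^{-cδ} (β(t) - α(t)) for some constant c > 0. Then for every t ≥ 0, α(t) ≥ ∫_0^t (β(s) - α(s)) ds. -/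
open MeasureTheory Real

private lemma aux_mem_Icc (t : ℝ) (ht : 0 ≤ t) (n : ℕ) (hn : 0 < n)
    (k : ℕ) (hk : k ≤ n) : (k : ℝ) * (t / n) ∈ Set.Icc (0:ℝ) t := by
  have hh0 : 0 ≤ t / n := div_nonneg ht n.cast_nonneg
  have h1 : (k:ℝ) ≤ n := by exact_mod_cast hk
  have h2 : (k:ℝ) * (t/n) ≤ (n:ℝ) * (t/n) := mul_le_mul_of_nonneg_right h1 hh0
  have h3 : (n:ℝ) * (t/n) = t := by field_simp
  constructor
  · positivity
  · linarith

private lemma aux_intervalIntegrable (f : ℝ → ℝ) (t : ℝ) (ht : 0 ≤ t)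
    (hf : MonotoneOn f (Set.Icc 0 t)) (n : ℕ) (hn : 0 < n) (k : ℕ) (hk : k < n) :
    IntervalIntegrable f volume ((k:ℝ) * (t / n)) ((k+1:ℝ) * (t / n)) := by
  have hh0 : 0 ≤ t / n := div_nonneg ht n.cast_nonneg
  have hle : (k:ℝ) * (t / n) ≤ (k+1:ℝ) * (t / n) := by
    apply mul_le_mul_of_nonneg_right _ hh0; linarith
  have hsub : Set.uIcc ((k:ℝ) * (t / n)) ((k+1:ℝ) * (t / n)) ⊆ Set.Icc 0 t := by
    rw [Set.uIcc_of_le hle]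
    apply Set.Icc_subset_Icc (aux_mem_Icc t ht n hn k hk.le).1
    have := (aux_mem_Icc t ht n hn (k+1) hk).2
    push_cast at this ⊢
    linarith
  exact (hf.mono hsub).intervalIntegrable

private lemma left_sum_le_integral (f : ℝ → ℝ) (t : ℝ) (ht : 0 ≤ t)
    (hf : MonotoneOn f (Set.Icc 0 t)) (n : ℕ) (hn : 0 < n) :
    ∑ k ∈ Finset.range n, (t / n) * f ((k:ℝ) * (t / n)) ≤ ∫ s in (0:ℝ)..t, f s := by
  set h := t / n with hh
  have hh0 : 0 ≤ h := div_nonneg ht n.cast_nonneg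
  have key : ∀ k ∈ Finset.range n,
      h * f ((k:ℝ) * h) ≤ ∫ s in ((k:ℝ) * h)..((k+1:ℝ) * h), f s := by
    intro k hk
    rw [Finset.mem_range] at hk
    have hle : (k:ℝ) * h ≤ (k+1:ℝ) * h := by
      apply mul_le_mul_of_nonneg_right _ hh0; linarith
    have hint := aux_intervalIntegrable f t ht hf n hn k hk
    have hmono : ∀ x ∈ Set.Icc ((k:ℝ)*h) ((k+1:ℝ)*h), f ((k:ℝ)*h) ≤ f x := by
      intro x hx
      have hx0 : x ∈ Set.Icc (0:ℝ) t := by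
        refine ⟨le_trans (aux_mem_Icc t ht n hn k hk.le).1 hx.1, le_trans hx.2 ?_⟩
        have := (aux_mem_Icc t ht n hn (k+1) hk).2
        push_cast at this; linarith
      exact hf (aux_mem_Icc t ht n hn k hk.le) hx0 hx.1
    calc h * f ((k:ℝ)*h) = ∫ _ in ((k:ℝ)*h)..((k+1:ℝ)*h), f ((k:ℝ)*h) := by
          rw [intervalIntegral.integral_const, smul_eq_mul]; ring
      _ ≤ ∫ s in ((k:ℝ)*h)..((k+1:ℝ)*h), f s := by
          apply intervalIntegral.integral_mono_on hle (by simp) hint hmono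
  calc ∑ k ∈ Finset.range n, h * f ((k:ℝ) * h)
      ≤ ∑ k ∈ Finset.range n, ∫ s in ((k:ℝ) * h)..((k+1:ℝ) * h), f s :=
        Finset.sum_le_sum key
    _ = ∫ s in (0:ℝ)..t, f s := by
        have := intervalIntegral.sum_integral_adjacent_intervals
          (a := fun k : ℕ => (k:ℝ) * h) (μ := volume) (f := f) (n := n)
          (fun k hk => by
            have := aux_intervalIntegrable f t ht hf n hn k hk
            push_cast
            convert this using 2)
        rw [show ∑ k ∈ Finset.range n, (∫ s in ((k:ℝ) * h)..((k+1:ℝ) * h), f s)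
            = ∑ k ∈ Finset.range n, (∫ s in ((k:ℝ) * h)..(((k+1:ℕ):ℝ) * h), f s) by
          apply Finset.sum_congr rfl; intro k _; push_cast; ring_nf]
        rw [this]
        norm_num
        rw [show (n:ℝ) * h = t by rw [hh]; field_simp]

private lemma integral_le_right_sum (f : ℝ → ℝ) (t : ℝ) (ht : 0 ≤ t)
    (hf : MonotoneOn f (Set.Icc 0 t)) (n : ℕ) (hn : 0 < n) :
    (∫ s in (0:ℝ)..t, f s) ≤ ∑ k ∈ Finset.range n, (t / n) * f ((k+1:ℝ) * (t / n)) := by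
  set h := t / n with hh
  have hh0 : 0 ≤ h := div_nonneg ht n.cast_nonneg
  have key : ∀ k ∈ Finset.range n,
      (∫ s in ((k:ℝ) * h)..((k+1:ℝ) * h), f s) ≤ h * f ((k+1:ℝ) * h) := by
    intro k hk
    rw [Finset.mem_range] at hk
    have hle : (k:ℝ) * h ≤ (k+1:ℝ) * h := by
      apply mul_le_mul_of_nonneg_right _ hh0; linarith
    have hint := aux_intervalIntegrable f t ht hf n hn k hk
    have hk1 : ((k:ℝ)+1) * h ∈ Set.Icc (0:ℝ) t := by
      have := aux_mem_Icc t ht n hn (k+1) hk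
      push_cast at this; exact this
    have hmono : ∀ x ∈ Set.Icc ((k:ℝ)*h) ((k+1:ℝ)*h), f x ≤ f ((k+1:ℝ)*h) := by
      intro x hx
      have hx0 : x ∈ Set.Icc (0:ℝ) t := by
        refine ⟨le_trans (aux_mem_Icc t ht n hn k hk.le).1 hx.1, le_trans hx.2 hk1.2⟩
      exact hf hx0 hk1 hx.2
    calc (∫ s in ((k:ℝ)*h)..((k+1:ℝ)*h), f s)
        ≤ ∫ _ in ((k:ℝ)*h)..((k+1:ℝ)*h), f ((k+1:ℝ)*h) := by
          apply intervalIntegral.integral_mono_on hle hint (by simp) hmono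
      _ = h * f ((k+1:ℝ)*h) := by
          rw [intervalIntegral.integral_const, smul_eq_mul]; ring
  calc (∫ s in (0:ℝ)..t, f s)
      = ∑ k ∈ Finset.range n, ∫ s in ((k:ℝ) * h)..((k+1:ℝ) * h), f s := by
        have := intervalIntegral.sum_integral_adjacent_intervals
          (a := fun k : ℕ => (k:ℝ) * h) (μ := volume) (f := f) (n := n)
          (fun k hk => by
            have := aux_intervalIntegrable f t ht hf n hn k hk
            push_cast
            convert this using 2)
        rw [show ∑ k ∈ Finset.range n, (∫ s in ((k:ℝ) * h)..((k+1:ℝ) * h), f s)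
            = ∑ k ∈ Finset.range n, (∫ s in ((k:ℝ) * h)..(((k+1:ℕ):ℝ) * h), f s) by
          apply Finset.sum_congr rfl; intro k _; push_cast; ring_nf]
        rw [this]
        norm_num
        rw [show (n:ℝ) * h = t by rw [hh]; field_simp]
    _ ≤ ∑ k ∈ Finset.range n, h * f ((k+1:ℝ) * h) := Finset.sum_le_sum key

theorem alpha_ge_integral_beta_sub_alpha (c : ℝ) (hc : 0 < c) (α β : ℝ → ℝ)
    (hαmono : ∀ s t : ℝ, 0 ≤ s → s ≤ t → α s ≤ α t)
    (hβmono : ∀ s t : ℝ, 0 ≤ s → s ≤ t → β s ≤ β t)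
    (hbdd : ∀ T : ℝ, 0 ≤ T → ∃ M : ℝ, ∀ s ∈ Set.Icc 0 T, |α s| ≤ M ∧ |β s| ≤ M)
    (hα0 : α 0 = 0)
    (hkey : ∀ t δ : ℝ, 0 ≤ t → 0 ≤ δ →
      α (t + δ) - α t ≥ δ * exp (-c * δ) * (β t - α t)) :
    ∀ t : ℝ, 0 ≤ t → α t ≥ ∫ s in (0:ℝ)..t, (β s - α s) := by
  intro t ht
  have hαm : MonotoneOn α (Set.Icc 0 t) := fun x hx y hy hxy => hαmono x y hx.1 hxy
  have hβm : MonotoneOn β (Set.Icc 0 t) := fun x hx y hy hxy => hβmono x y hx.1 hxy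
  have hαint : IntervalIntegrable α volume 0 t :=
    (hαm.mono (by rw [Set.uIcc_of_le ht])).intervalIntegrable
  have hβint : IntervalIntegrable β volume 0 t :=
    (hβm.mono (by rw [Set.uIcc_of_le ht])).intervalIntegrable
  have hI : (∫ s in (0:ℝ)..t, (β s - α s)) =
      (∫ s in (0:ℝ)..t, β s) - ∫ s in (0:ℝ)..t, α s :=
    intervalIntegral.integral_sub hβint hαint
  set I : ℝ := ∫ s in (0:ℝ)..t, (β s - α s) with hIdef
  -- main estimate for each n ≥ 1
  have main : ∀ n : ℕ, 0 < n →
      exp (-c * (t / n)) * (I - (t / n) * (β t - β 0)) ≤ α t := by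
    intro n hn
    set h := t / n with hh
    have hh0 : 0 ≤ h := div_nonneg ht n.cast_nonneg
    have hnh : (n:ℝ) * h = t := by rw [hh]; field_simp
    -- telescoping
    have htel : ∑ k ∈ Finset.range n, (α (((k:ℝ)+1) * h) - α ((k:ℝ) * h)) = α t := by
      have := Finset.sum_range_sub (f := fun k : ℕ => α ((k:ℝ) * h)) n
      rw [show ∑ k ∈ Finset.range n, (α (((k:ℝ)+1) * h) - α ((k:ℝ) * h))
          = ∑ k ∈ Finset.range n, (α (((k+1:ℕ):ℝ) * h) - α ((k:ℝ) * h)) by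
        apply Finset.sum_congr rfl; intro k _; push_cast; ring_nf]
      rw [this, hnh]
      norm_num [hα0]
    have hstep : ∀ k ∈ Finset.range n,
        h * exp (-c * h) * (β ((k:ℝ)*h) - α ((k:ℝ)*h))
          ≤ α (((k:ℝ)+1) * h) - α ((k:ℝ) * h) := by
      intro k hk
      rw [Finset.mem_range] at hk
      have hk0 : 0 ≤ (k:ℝ) * h := by positivity
      have := hkey ((k:ℝ)*h) h hk0 hh0
      have harg : (k:ℝ)*h + h = ((k:ℝ)+1)*h := by ring
      rw [harg] at this
      linarith [this]
    have hsum : exp (-c * h) * ∑ k ∈ Finset.range n, h * (β ((k:ℝ)*h) - α ((k:ℝ)*h))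
        ≤ α t := by
      rw [← htel, Finset.mul_sum]
      apply Finset.sum_le_sum
      intro k hk
      have := hstep k hk
      calc exp (-c*h) * (h * (β ((k:ℝ)*h) - α ((k:ℝ)*h)))
          = h * exp (-c*h) * (β ((k:ℝ)*h) - α ((k:ℝ)*h)) := by ring
        _ ≤ _ := this
    -- Riemann sum bounds
    have hβsum : (∫ s in (0:ℝ)..t, β s) - h * (β t - β 0)
        ≤ ∑ k ∈ Finset.range n, h * β ((k:ℝ)*h) := by
      have h1 := integral_le_right_sum β t ht hβm n hn
      have h2 : ∑ k ∈ Finset.range n, h * β (((k:ℝ)+1) * h)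
          = ∑ k ∈ Finset.range n, h * β ((k:ℝ)*h) + (h * β ((n:ℝ)*h) - h * β 0) := by
        have := Finset.sum_range_succ_comm (f := fun k : ℕ => h * β ((k:ℝ) * h)) n
        have e1 : ∑ k ∈ Finset.range n, h * β (((k:ℝ)+1) * h)
            = ∑ k ∈ Finset.range n, h * β (((k+1:ℕ):ℝ) * h) := by
          apply Finset.sum_congr rfl; intro k _; push_cast; ring_nf
        rw [e1]
        have := Finset.sum_range_succ' (f := fun k : ℕ => h * β ((k:ℝ) * h)) n
        have := Finset.sum_range_succ (f := fun k : ℕ => h * β ((k:ℝ) * h)) n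
        -- ∑_{k<n} f(k+1) = ∑_{k<n+1} f k - f 0 = (∑_{k<n} f k + f n) - f 0
        have e2 : ∑ k ∈ Finset.range (n+1), h * β ((k:ℝ) * h)
            = ∑ k ∈ Finset.range n, h * β (((k+1:ℕ):ℝ) * h) + h * β ((0:ℕ) * h) :=
          Finset.sum_range_succ' _ n
        have e3 : ∑ k ∈ Finset.range (n+1), h * β ((k:ℝ) * h)
            = ∑ k ∈ Finset.range n, h * β ((k:ℝ) * h) + h * β ((n:ℝ) * h) :=
          Finset.sum_range_succ _ n
        push_cast at e2
        simp only [Nat.cast_zero, zero_mul] at e2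
        linarith [e2, e3]
      rw [hnh] at h2
      have := h1
      rw [← hh] at this
      linarith [this, h2]
    have hαsum : ∑ k ∈ Finset.range n, h * α ((k:ℝ)*h) ≤ ∫ s in (0:ℝ)..t, α s := by
      have := left_sum_le_integral α t ht hαm n hn
      rw [← hh] at this
      exact this
    have hsplit : ∑ k ∈ Finset.range n, h * (β ((k:ℝ)*h) - α ((k:ℝ)*h))
        = (∑ k ∈ Finset.range n, h * β ((k:ℝ)*h))
          - ∑ k ∈ Finset.range n, h * α ((k:ℝ)*h) := by
      rw [← Finset.sum_sub_distrib]
      apply Finset.sum_congr rfl; intro k _; ring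
    have hRsum : I - h * (β t - β 0)
        ≤ ∑ k ∈ Finset.range n, h * (β ((k:ℝ)*h) - α ((k:ℝ)*h)) := by
      rw [hsplit, hI]
      linarith [hβsum, hαsum]
    have hexp0 : 0 < exp (-c * h) := exp_pos _
    calc exp (-c * h) * (I - h * (β t - β 0))
        ≤ exp (-c * h) * ∑ k ∈ Finset.range n, h * (β ((k:ℝ)*h) - α ((k:ℝ)*h)) := by
          apply mul_le_mul_of_nonneg_left hRsum hexp0.le
      _ ≤ α t := hsum
  -- pass to the limit n → ∞
  have hlim : Filter.Tendsto
      (fun n : ℕ => exp (-c * (t / n)) * (I - (t / n) * (β t - β 0)))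
      Filter.atTop (nhds (exp (-c * 0) * (I - 0 * (β t - β 0)))) := by
    have htend : Filter.Tendsto (fun n : ℕ => t / (n:ℝ)) Filter.atTop (nhds 0) :=
      tendsto_const_div_atTop_nhds_zero_nat t
    apply Filter.Tendsto.mul
    · exact (Real.continuous_exp.tendsto _).comp (htend.const_mul (-c))
    · exact Filter.Tendsto.const_sub _ (htend.mul_const _)
  have : exp (-c * 0) * (I - 0 * (β t - β 0)) = I := by simp
  rw [this] at hlim
  exact le_of_tendsto hlim (Filter.eventually_atTop.mpr ⟨1, fun n hn => main n hn⟩)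
end

section
/- Let {ν_s}_{s≥0} be a family of probability measures on a Polish space with P*ν_s = ν_{s+T} for fixed T > 0, and for a > 0 let γ_a = ∫_0^∞ a^{-1}e^{-s/a} ν_s ds (exponential mixture). Then for every bounded measurable Φ, ∫Φ d(P*γ_a) − ∫Φ dγ_a → 0 as a → ∞. -/
open MeasureTheory Filter Real Set Topology

private lemma integral_exp_div_Ioi (a c : ℝ) (ha : 0 < a) :
    ∫ s in Ioi c, exp (-s / a) = a * exp (-c / a) := by
  have hderiv : ∀ x ∈ Ici c, HasDerivAt (fun s => -a * exp (-s / a)) (exp (-x / a)) x := by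
    intro x _
    have h1 : HasDerivAt (fun s : ℝ => -s / a) (-1 / a) x := by
      simpa using ((hasDerivAt_id x).neg.div_const a)
    have := (h1.exp).const_mul (-a)
    convert this using 1
    · rfl
    · rfl
    · field_simp
  have hint : IntegrableOn (fun s => exp (-s / a)) (Ioi c) := by
    have := exp_neg_integrableOn_Ioi c (inv_pos.mpr ha)
    refine this.congr_fun (fun x _ => ?_) measurableSet_Ioi
    beta_reduce
    rw [neg_div, div_eq_inv_mul, neg_mul]
  have htend : Tendsto (fun s => -a * exp (-s / a)) atTop (𝓝 0) := by
    have : Tendsto (fun s : ℝ => -s / a) atTop atBot := by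
      apply Tendsto.atBot_div_const ha
      exact tendsto_neg_atTop_atBot
    simpa using (Real.tendsto_exp_atBot.comp this).const_mul (-a)
  have := integral_Ioi_of_hasDerivAt_of_tendsto' hderiv hint htend
  rw [this]; ring

private lemma integrableOn_exp_div (a c : ℝ) (ha : 0 < a) :
    IntegrableOn (fun s => exp (-s / a)) (Ioi c) := by
  have := exp_neg_integrableOn_Ioi c (inv_pos.mpr ha)
  refine this.congr_fun (fun x _ => ?_) measurableSet_Ioi
  beta_reduce
  rw [neg_div, div_eq_inv_mul, neg_mul]

private lemma key_bound (g : ℝ → ℝ) (hg : Measurable g) (M : ℝ) (hgb : ∀ s, |g s| ≤ M)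
    (T : ℝ) (hT : 0 < T) (a : ℝ) (ha : 0 < a) :
    |(∫ s in Ioi (0:ℝ), a⁻¹ * exp (-s / a) * g (s + T))
        - ∫ s in Ioi (0:ℝ), a⁻¹ * exp (-s / a) * g s|
      ≤ M * (exp (T / a) - 1) + M * (T / a) := by
  have hM0 : 0 ≤ M := le_trans (abs_nonneg _) (hgb 0)
  -- integrability of the basic integrand on Ioi c
  have hint : ∀ c : ℝ, IntegrableOn (fun s => a⁻¹ * exp (-s / a) * g s) (Ioi c) := by
    intro c
    have hbase := integrableOn_exp_div a c ha
    have hb := hbase.bdd_mul ((hg.const_mul a⁻¹).aestronglyMeasurable)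
      (c := a⁻¹ * M) (ae_of_all _ fun x => by
        rw [norm_mul, Real.norm_eq_abs, Real.norm_eq_abs, abs_of_nonneg (inv_nonneg.mpr ha.le)]
        exact mul_le_mul_of_nonneg_left (hgb x) (inv_nonneg.mpr ha.le))
    exact IntegrableOn.congr_fun hb (fun x _ => by ring) measurableSet_Ioi
  -- Step A: shift the first integral
  have hshift : (∫ s in Ioi (0:ℝ), a⁻¹ * exp (-s / a) * g (s + T))
      = ∫ s in Ioi T, a⁻¹ * exp (-(s - T) / a) * g s := by
    rw [← integral_indicator measurableSet_Ioi, ← integral_indicator measurableSet_Ioi]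
    have key : ∀ s : ℝ, (Ioi (0:ℝ)).indicator (fun s => a⁻¹ * exp (-s / a) * g (s + T)) s
        = (Ioi T).indicator (fun s => a⁻¹ * exp (-(s - T) / a) * g s) (s + T) := by
      intro s
      by_cases hs : s ∈ Ioi (0:ℝ)
      · rw [indicator_of_mem hs, indicator_of_mem (by simpa [mem_Ioi] using hs)]
        simp
      · rw [indicator_of_notMem hs, indicator_of_notMem (by simpa [mem_Ioi] using hs)]
    calc ∫ s, (Ioi (0:ℝ)).indicator (fun s => a⁻¹ * exp (-s / a) * g (s + T)) s
        = ∫ s, (Ioi T).indicator (fun s => a⁻¹ * exp (-(s - T) / a) * g s) (s + T) := by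
          simp_rw [key]
      _ = ∫ s, (Ioi T).indicator (fun s => a⁻¹ * exp (-(s - T) / a) * g s) s :=
          integral_add_right_eq_self _ T
  -- Step B: split the second integral at T
  have hsplit : (∫ s in Ioi (0:ℝ), a⁻¹ * exp (-s / a) * g s)
      = (∫ s in Ioc 0 T, a⁻¹ * exp (-s / a) * g s)
        + ∫ s in Ioi T, a⁻¹ * exp (-s / a) * g s := by
    rw [← Ioc_union_Ioi_eq_Ioi hT.le]
    exact setIntegral_union (Ioc_disjoint_Ioi le_rfl) measurableSet_Ioi
      ((hint 0).mono_set Ioc_subset_Ioi_self) (hint T)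
  rw [hshift, hsplit]
  -- rewrite the shifted exponential
  have hexp : ∀ s : ℝ, exp (-(s - T) / a) = exp (T / a) * exp (-s / a) := by
    intro s
    rw [← Real.exp_add]
    congr 1
    ring
  have habs : |((∫ s in Ioi T, a⁻¹ * exp (-(s - T) / a) * g s)
      - ((∫ s in Ioc 0 T, a⁻¹ * exp (-s / a) * g s)
        + ∫ s in Ioi T, a⁻¹ * exp (-s / a) * g s))|
      ≤ |(∫ s in Ioi T, a⁻¹ * exp (-(s - T) / a) * g s)
          - ∫ s in Ioi T, a⁻¹ * exp (-s / a) * g s|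
        + |∫ s in Ioc 0 T, a⁻¹ * exp (-s / a) * g s| := by
    rw [show (∫ s in Ioi T, a⁻¹ * exp (-(s - T) / a) * g s)
      - ((∫ s in Ioc 0 T, a⁻¹ * exp (-s / a) * g s)
        + ∫ s in Ioi T, a⁻¹ * exp (-s / a) * g s)
      = ((∫ s in Ioi T, a⁻¹ * exp (-(s - T) / a) * g s)
          - ∫ s in Ioi T, a⁻¹ * exp (-s / a) * g s)
        - ∫ s in Ioc 0 T, a⁻¹ * exp (-s / a) * g s by ring]
    exact (abs_sub _ _)
  refine habs.trans (add_le_add ?_ ?_)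
  · -- first term
    have hint1 : IntegrableOn (fun s => a⁻¹ * exp (-(s - T) / a) * g s) (Ioi T) := by
      refine IntegrableOn.congr_fun ((hint T).const_mul (exp (T / a)))
        (fun x _ => ?_) measurableSet_Ioi
      rw [hexp]; ring
    rw [← integral_sub hint1 (hint T)]
    have hb : ∀ s : ℝ, ‖a⁻¹ * exp (-(s - T) / a) * g s - a⁻¹ * exp (-s / a) * g s‖
        ≤ M * a⁻¹ * (exp (T / a) - 1) * exp (-s / a) := by
      intro s
      rw [hexp]
      have : a⁻¹ * (exp (T / a) * exp (-s / a)) * g s - a⁻¹ * exp (-s / a) * g s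
          = (a⁻¹ * (exp (T / a) - 1) * exp (-s / a)) * g s := by ring
      rw [this, norm_mul, Real.norm_eq_abs, Real.norm_eq_abs]
      have h1 : 0 ≤ a⁻¹ * (exp (T / a) - 1) * exp (-s / a) := by
        have : (1:ℝ) ≤ exp (T / a) := by
          rw [← Real.exp_zero]
          exact Real.exp_le_exp.mpr (by positivity)
        exact mul_nonneg (mul_nonneg (inv_nonneg.mpr ha.le) (by linarith)) (Real.exp_pos _).le
      rw [abs_of_nonneg h1]
      calc a⁻¹ * (exp (T / a) - 1) * exp (-s / a) * |g s|
          ≤ a⁻¹ * (exp (T / a) - 1) * exp (-s / a) * M := by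
            exact mul_le_mul_of_nonneg_left (hgb s) h1
        _ = M * a⁻¹ * (exp (T / a) - 1) * exp (-s / a) := by ring
    have hGint : IntegrableOn (fun s => M * a⁻¹ * (exp (T / a) - 1) * exp (-s / a)) (Ioi T) :=
      (integrableOn_exp_div a T ha).const_mul _
    have := norm_integral_le_of_norm_le hGint (ae_of_all _ hb)
    rw [Real.norm_eq_abs] at this
    refine this.trans ?_
    rw [integral_const_mul, integral_exp_div_Ioi a T ha]
    have h1 : (1:ℝ) ≤ exp (T / a) := by
      rw [← Real.exp_zero]; exact Real.exp_le_exp.mpr (by positivity)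
    have h2 : exp (-T / a) ≤ 1 := by
      rw [← Real.exp_zero]; exact Real.exp_le_exp.mpr (by rw [neg_div]; linarith [div_pos hT ha])
    calc M * a⁻¹ * (exp (T / a) - 1) * (a * exp (-T / a))
        = M * (exp (T / a) - 1) * exp (-T / a) * (a⁻¹ * a) := by ring
      _ = M * (exp (T / a) - 1) * exp (-T / a) := by rw [inv_mul_cancel₀ ha.ne']; ring
      _ ≤ M * (exp (T / a) - 1) * 1 := by
          exact mul_le_mul_of_nonneg_left h2 (mul_nonneg hM0 (by linarith))
      _ = M * (exp (T / a) - 1) := by ring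
  · -- second term
    have hb : ∀ᵐ s ∂(volume.restrict (Ioc (0:ℝ) T)),
        ‖a⁻¹ * exp (-s / a) * g s‖ ≤ M * a⁻¹ := by
      filter_upwards [ae_restrict_mem measurableSet_Ioc] with s hs
      rw [norm_mul, norm_mul, Real.norm_eq_abs, Real.norm_eq_abs, Real.norm_eq_abs,
        abs_of_nonneg (inv_nonneg.mpr ha.le), abs_of_nonneg (Real.exp_pos _).le]
      have he : exp (-s / a) ≤ 1 := by
        rw [← Real.exp_zero]
        apply Real.exp_le_exp.mpr
        rw [neg_div]
        have : 0 ≤ s / a := div_nonneg hs.1.le ha.le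
        linarith
      calc a⁻¹ * exp (-s / a) * |g s| ≤ a⁻¹ * 1 * M := by
            apply mul_le_mul (mul_le_mul_of_nonneg_left he (inv_nonneg.mpr ha.le)) (hgb s)
              (abs_nonneg _) (by positivity)
        _ = M * a⁻¹ := by ring
    have := norm_integral_le_of_norm_le (integrableOn_const
      measure_Ioc_lt_top.ne) hb
    rw [Real.norm_eq_abs] at this
    refine this.trans ?_
    rw [setIntegral_const, smul_eq_mul, Real.volume_real_Ioc_of_le hT.le]
    rw [sub_zero]
    calc T * (M * a⁻¹) = M * (T / a) := by rw [div_eq_mul_inv]; ring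
      _ ≤ M * (T / a) := le_rfl

/-- If `P*ν_s = ν_{s+T}` and `γ_a` is the exponential mixture of the `ν_s` with mean `a`,
then `∫Φ d(P*γ_a) − ∫Φ dγ_a → 0` as `a → ∞` for bounded measurable `Φ`. -/
theorem exponential_mixture_almost_stationary {Ω : Type*} [MeasurableSpace Ω]
    (ν : ℝ → Measure Ω) (hprob : ∀ s, IsProbabilityMeasure (ν s))
    (T : ℝ) (hT : 0 < T) (Φ : Ω → ℝ) (hΦ : Measurable Φ)
    (M : ℝ) (hM : ∀ f, |Φ f| ≤ M)
    (hmeas : Measurable fun s => ∫ f, Φ f ∂(ν s)) :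
    Tendsto (fun a : ℝ =>
      (∫ s in Set.Ioi (0:ℝ), a⁻¹ * exp (-s / a) * ∫ f, Φ f ∂(ν (s + T)))
        - ∫ s in Set.Ioi (0:ℝ), a⁻¹ * exp (-s / a) * ∫ f, Φ f ∂(ν s))
      atTop (nhds 0) := by
  set g : ℝ → ℝ := fun s => ∫ f, Φ f ∂ν s with hg_def
  have hgb : ∀ s, |g s| ≤ M := by
    intro s
    have := norm_integral_le_of_norm_le_const (μ := ν s) (C := M)
      (ae_of_all _ fun f => by rw [Real.norm_eq_abs]; exact hM f)
    simpa [Real.norm_eq_abs, measure_univ] using this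
  refine squeeze_zero_norm' (a := fun b : ℝ => M * (exp (T / b) - 1) + M * (T / b)) ?_ ?_
  · filter_upwards [eventually_gt_atTop (0:ℝ)] with a ha
    rw [Real.norm_eq_abs]
    exact key_bound g hmeas M hgb T hT a ha
  · have h1 : Tendsto (fun a : ℝ => T / a) atTop (𝓝 0) :=
      tendsto_const_nhds.div_atTop tendsto_id
    have h2 : Tendsto (fun a : ℝ => exp (T / a)) atTop (𝓝 1) := by
      have := (Real.continuous_exp.tendsto 0).comp h1
      simpa [Function.comp_def] using this
    have := ((h2.sub_const 1).const_mul M).add (h1.const_mul M)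
    simpa using this
end
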